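/- Gauge invariance of the Ernst equations: let ℰ, Λ be twice continuously differentiable complex-valued functions on an open set U ⊆ ℝ × ℝ on which the first coordinate ρ(x) := x.1 is positive, and suppose (ℰ, Λ) satisfies the Ernst equations on U. Then for any complex constant λ and real constant ω, the transformed pair ℰ' := ℰ - λ*conj(λ) + I*ω - 2*conj(λ)*Λ, Λ' := Λ + λ also satisfies the Ernst equations on U, and moreover N' := -(ℰ' + conj ℰ' + 2*Λ'*conj Λ')/2 equals N := -(ℰ + conj ℰ + 2*Λ*conj Λ)/2 and ∂ᵢℰ' + 2*conj(Λ')*∂ᵢΛ' = ∂ᵢℰ + 2*conj(Λ)*∂ᵢΛ for i = 1, 2. -/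

import Mathlib

open Complex ComplexConjugate

/-- Partial derivative along the first coordinate direction of `ℝ × ℝ`. -/
noncomputable def pd1 {F : Type*} [NormedAddCommGroup F] [NormedSpace ℝ F]
    (f : ℝ × ℝ → F) (x : ℝ × ℝ) : F :=
  fderiv ℝ f x (1, 0)

/-- Partial derivative along the second coordinate direction of `ℝ × ℝ`. -/
noncomputable def pd2 {F : Type*} [NormedAddCommGroup F] [NormedSpace ℝ F]
    (f : ℝ × ℝ → F) (x : ℝ × ℝ) : F :=
  fderiv ℝ f x (0, 1)

/-- The stationary and axisymmetric electrovacuum Ernst equations on `U`, for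
the Ernst potential `ℰ` and electromagnetic potential `Λ`, with
`N = -(ℰ + conj ℰ + 2 Λ conj Λ)/2` and weight `ρ(x) = x.1`. -/
def ErnstEqns (U : Set (ℝ × ℝ)) (ℰ Λ : ℝ × ℝ → ℂ) : Prop :=
  ∀ x ∈ U,
    (-(ℰ x + conj (ℰ x) + 2 * Λ x * conj (Λ x)) / 2) *
        (pd1 (fun y => (y.1 : ℂ) * pd1 ℰ y) x + pd2 (fun y => (y.1 : ℂ) * pd2 ℰ y) x)
      + (x.1 : ℂ) *
        ((pd1 ℰ x) * (pd1 ℰ x + 2 * conj (Λ x) * pd1 Λ x)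
          + (pd2 ℰ x) * (pd2 ℰ x + 2 * conj (Λ x) * pd2 Λ x)) = 0 ∧
    (-(ℰ x + conj (ℰ x) + 2 * Λ x * conj (Λ x)) / 2) *
        (pd1 (fun y => (y.1 : ℂ) * pd1 Λ y) x + pd2 (fun y => (y.1 : ℂ) * pd2 Λ y) x)
      + (x.1 : ℂ) *
        ((pd1 Λ x) * (pd1 ℰ x + 2 * conj (Λ x) * pd1 Λ x)
          + (pd2 Λ x) * (pd2 ℰ x + 2 * conj (Λ x) * pd2 Λ x)) = 0

/-- Gauge invariance of the Ernst equations: if `(ℰ, Λ)` is a `C²` solution of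
the Ernst equations on the open set `U` (with `ρ > 0` on `U`), then for any
complex constant `λ` and real constant `ω` the gauge transformed pair
`ℰ' = ℰ - λ conj λ + i ω - 2 conj(λ) Λ`, `Λ' = Λ + λ` is also a solution;
moreover `N' = N` everywhere and
`∂ᵢℰ' + 2 conj(Λ') ∂ᵢΛ' = ∂ᵢℰ + 2 conj(Λ) ∂ᵢΛ` on `U` for `i = 1, 2`. -/
theorem ernst_gauge_invariance (U : Set (ℝ × ℝ)) (hU : IsOpen U)
    (hρ : ∀ x ∈ U, 0 < x.1)
    (ℰ Λ : ℝ × ℝ → ℂ) (hE : ContDiffOn ℝ 2 ℰ U) (hL : ContDiffOn ℝ 2 Λ U)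
    (hErnst : ErnstEqns U ℰ Λ) (lam : ℂ) (ω : ℝ) :
    ErnstEqns U (fun x => ℰ x - lam * conj lam + I * ω - 2 * conj lam * Λ x)
      (fun x => Λ x + lam) ∧
    (∀ x : ℝ × ℝ,
      -((ℰ x - lam * conj lam + I * ω - 2 * conj lam * Λ x)
          + conj (ℰ x - lam * conj lam + I * ω - 2 * conj lam * Λ x)
          + 2 * (Λ x + lam) * conj (Λ x + lam)) / 2
        = -(ℰ x + conj (ℰ x) + 2 * Λ x * conj (Λ x)) / 2) ∧
    (∀ x ∈ U,
      pd1 (fun y => ℰ y - lam * conj lam + I * ω - 2 * conj lam * Λ y) x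
          + 2 * conj (Λ x + lam) * pd1 (fun y => Λ y + lam) x
        = pd1 ℰ x + 2 * conj (Λ x) * pd1 Λ x ∧
      pd2 (fun y => ℰ y - lam * conj lam + I * ω - 2 * conj lam * Λ y) x
          + 2 * conj (Λ x + lam) * pd2 (fun y => Λ y + lam) x
        = pd2 ℰ x + 2 * conj (Λ x) * pd2 Λ x) := by
  classical
  set c : ℂ := 2 * conj lam with hcdef
  set E' : ℝ × ℝ → ℂ := fun x => ℰ x - lam * conj lam + I * ω - 2 * conj lam * Λ x with hE'def
  set L' : ℝ × ℝ → ℂ := fun x => Λ x + lam with hL'def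
  -- first order derivative facts
  have hEdiff : ∀ x ∈ U, DifferentiableAt ℝ ℰ x := fun x hx =>
    (hE.contDiffAt (hU.mem_nhds hx)).differentiableAt (by norm_num)
  have hLdiff : ∀ x ∈ U, DifferentiableAt ℝ Λ x := fun x hx =>
    (hL.contDiffAt (hU.mem_nhds hx)).differentiableAt (by norm_num)
  have hdE' : ∀ x ∈ U, HasFDerivAt E' (fderiv ℝ ℰ x - c • fderiv ℝ Λ x) x := by
    intro x hx
    have h0 := ((hEdiff x hx).hasFDerivAt.sub_const (lam * conj lam)).add_const (I * ω)
    have h1 := (hLdiff x hx).hasFDerivAt.const_mul c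
    exact h0.sub h1
  have hdL' : ∀ x ∈ U, HasFDerivAt L' (fderiv ℝ Λ x) x := fun x hx =>
    (hLdiff x hx).hasFDerivAt.add_const lam
  have hE'v : ∀ x ∈ U, ∀ v, fderiv ℝ E' x v = fderiv ℝ ℰ x v - c * fderiv ℝ Λ x v := by
    intro x hx v
    rw [(hdE' x hx).fderiv]
    simp [ContinuousLinearMap.sub_apply, ContinuousLinearMap.smul_apply, smul_eq_mul]
  have hL'v : ∀ x ∈ U, ∀ v, fderiv ℝ L' x v = fderiv ℝ Λ x v := by
    intro x hx v
    rw [(hdL' x hx).fderiv]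
  -- differentiability of ρ ∂f for C² f
  have hρd : ∀ (f : ℝ × ℝ → ℂ), ContDiffOn ℝ 2 f U → ∀ v, ∀ x ∈ U,
      DifferentiableAt ℝ (fun y => (y.1 : ℂ) * fderiv ℝ f y v) x := by
    intro f hf v x hx
    have h1 : ContDiffOn ℝ 1 (fun y => fderiv ℝ f y) U :=
      hf.fderiv_of_isOpen hU (by norm_num)
    have h2 : ContDiffOn ℝ 1 (fun y => fderiv ℝ f y v) U :=
      h1.clm_apply contDiffOn_const
    have h3 : ContDiff ℝ 1 (fun y : ℝ × ℝ => (y.1 : ℂ)) :=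
      Complex.ofRealCLM.contDiff.comp contDiff_fst
    have h4 : ContDiffOn ℝ 1 (fun y : ℝ × ℝ => (y.1 : ℂ) * fderiv ℝ f y v) U :=
      h3.contDiffOn.mul h2
    exact ((h4.differentiableOn one_ne_zero) x hx).differentiableAt (hU.mem_nhds hx)
  -- second order derivative facts
  have key2E : ∀ (v w : ℝ × ℝ), ∀ x ∈ U,
      fderiv ℝ (fun y => (y.1 : ℂ) * fderiv ℝ E' y v) x w
        = fderiv ℝ (fun y => (y.1 : ℂ) * fderiv ℝ ℰ y v) x w
          - c * fderiv ℝ (fun y => (y.1 : ℂ) * fderiv ℝ Λ y v) x w := by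
    intro v w x hx
    have heq : (fun y => (y.1 : ℂ) * fderiv ℝ E' y v)
        =ᶠ[nhds x] (fun y => (y.1 : ℂ) * fderiv ℝ ℰ y v
          - c * ((y.1 : ℂ) * fderiv ℝ Λ y v)) := by
      filter_upwards [hU.mem_nhds hx] with y hy
      rw [hE'v y hy v]; ring
    rw [heq.fderiv_eq]
    have h1 := hρd ℰ hE v x hx
    have h2 := hρd Λ hL v x hx
    have := ((h1.hasFDerivAt).sub ((h2.hasFDerivAt).const_mul c)).fderiv
    rw [show (fun y => (y.1 : ℂ) * fderiv ℝ ℰ y v - c * ((y.1 : ℂ) * fderiv ℝ Λ y v)) = ((fun y => (y.1 : ℂ) * fderiv ℝ ℰ y v) - fun y => c * ((y.1 : ℂ) * fderiv ℝ Λ y v)) from rfl, this]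
    simp [ContinuousLinearMap.sub_apply, ContinuousLinearMap.smul_apply, smul_eq_mul]
  have key2L : ∀ (v w : ℝ × ℝ), ∀ x ∈ U,
      fderiv ℝ (fun y => (y.1 : ℂ) * fderiv ℝ L' y v) x w
        = fderiv ℝ (fun y => (y.1 : ℂ) * fderiv ℝ Λ y v) x w := by
    intro v w x hx
    have heq : (fun y => (y.1 : ℂ) * fderiv ℝ L' y v)
        =ᶠ[nhds x] (fun y => (y.1 : ℂ) * fderiv ℝ Λ y v) := by
      filter_upwards [hU.mem_nhds hx] with y hy
      rw [hL'v y hy v]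
    rw [heq.fderiv_eq]
  -- N' = N
  have hN : ∀ x : ℝ × ℝ,
      -(E' x + conj (E' x) + 2 * L' x * conj (L' x)) / 2
        = -(ℰ x + conj (ℰ x) + 2 * Λ x * conj (Λ x)) / 2 := by
    intro x
    simp only [hE'def, hL'def, map_add, map_sub, map_mul, Complex.conj_conj,
      Complex.conj_I, Complex.conj_ofReal, map_ofNat]
    ring
  refine ⟨?_, hN, ?_⟩
  · intro x hx
    obtain ⟨h1, h2⟩ := hErnst x hx
    constructor
    · show -(E' x + conj (E' x) + 2 * L' x * conj (L' x)) / 2 * _ + _ = 0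
      simp only [pd1, pd2] at h1 h2 ⊢
      rw [hN x, key2E (1,0) (1,0) x hx, key2E (0,1) (0,1) x hx,
        hE'v x hx (1,0), hE'v x hx (0,1), hL'v x hx (1,0), hL'v x hx (0,1),
        hL'def]
      simp only [map_add]
      linear_combination h1 - c * h2
    · show -(E' x + conj (E' x) + 2 * L' x * conj (L' x)) / 2 * _ + _ = 0
      simp only [pd1, pd2] at h1 h2 ⊢
      rw [hN x, key2L (1,0) (1,0) x hx, key2L (0,1) (0,1) x hx,
        hE'v x hx (1,0), hE'v x hx (0,1), hL'v x hx (1,0), hL'v x hx (0,1),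
        hL'def]
      simp only [map_add]
      linear_combination h2
  · intro x hx
    constructor
    · show pd1 E' x + 2 * conj (L' x) * pd1 L' x = _
      simp only [pd1]
      rw [hE'v x hx (1,0), hL'v x hx (1,0), hL'def]
      simp only [map_add]
      ring
    · show pd2 E' x + 2 * conj (L' x) * pd2 L' x = _
      simp only [pd2]
      rw [hE'v x hx (0,1), hL'v x hx (0,1), hL'def]
      simp only [map_add]
      ring
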